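/- Fix an integer d ≥ 3, δ ∈ (0, 2/(d−2)], β > 0, ε ∈ (0,1) with 4^{d−2} ε^{(d−2)δ} ≤ 1/2, and a positive integer k. Let S_{k,ε} := k^{−d} Σ_{w ∈ ℤ^d ∩ [0,k)^d} Y_{ε,w} 1_{ρ_w < T_ε} (an average over exactly k^d lattice points). Then there is C = C(d) such that E[ (S_{k,ε} − E[ρ^{d−2}])² ] ≤ C ( k^{−d} Var( Y_{ε,0} 1_{ρ_0 < T_ε} ) + ε^4 ( E[ρ^{2(d−2)} 1_{ρ < T_ε}] )² + ε^{2(2/(d−2) − δ)β} ). -/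

import Mathlib

open MeasureTheory ProbabilityTheory

noncomputable section

/-- The truncation threshold `T_ε := ε^{−2/(d−2)+δ}`. -/
def Ttrunc (d : ℕ) (ε δ : ℝ) : ℝ := ε ^ (-(2 / ((d : ℝ) - 2)) + δ)

/-- `Y_{ε} 1_{ρ < T_ε}` as a function of the mark:
`x ↦ x^{d−2} / (1 − 4^{d−2} ε² x^{d−2})` on `{x < T_ε}`, `0` otherwise. -/
def Yind (d : ℕ) (ε δ : ℝ) : ℝ → ℝ :=
  Set.indicator {x | x < Ttrunc d ε δ}
    (fun x => x ^ ((d : ℝ) - 2) / (1 - 4 ^ ((d : ℝ) - 2) * ε ^ 2 * x ^ ((d : ℝ) - 2)))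

lemma measurable_Yind (d : ℕ) (ε δ : ℝ) : Measurable (Yind d ε δ) := by
  unfold Yind
  exact Measurable.indicator (by fun_prop) measurableSet_Iio

lemma Yind_bounds (d : ℕ) (hd : 3 ≤ d) {ε δ : ℝ} (hε : 0 < ε)
    (hsmall : (4 : ℝ) ^ ((d : ℝ) - 2) * ε ^ (((d : ℝ) - 2) * δ) ≤ 1 / 2) {x : ℝ} (hx : 0 ≤ x) :
    0 ≤ Yind d ε δ x ∧ Yind d ε δ x ≤ 2 * (Ttrunc d ε δ) ^ ((d : ℝ) - 2) ∧
    |Yind d ε δ x - x ^ ((d : ℝ) - 2)| ≤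
      2 * 4 ^ ((d : ℝ) - 2) * ε ^ 2 *
        Set.indicator {y | y < Ttrunc d ε δ} (fun y => y ^ (2 * ((d : ℝ) - 2))) x
      + Set.indicator {y | Ttrunc d ε δ ≤ y} (fun y => y ^ ((d : ℝ) - 2)) x := by
  have hd3 : (3 : ℝ) ≤ (d : ℝ) := by exact_mod_cast hd
  set D : ℝ := (d : ℝ) - 2 with hD
  have hD1 : 1 ≤ D := by simp [hD]; linarith
  have hD0 : 0 < D := by linarith
  set T : ℝ := Ttrunc d ε δ with hT
  have hTpos : 0 < T := Real.rpow_pos_of_pos hε _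
  have hTD : ε ^ 2 * T ^ D = ε ^ (D * δ) := by
    rw [hT, Ttrunc, ← Real.rpow_natCast ε 2, ← Real.rpow_mul hε.le, ← Real.rpow_add hε]
    congr 1
    have hne : (d:ℝ) - 2 ≠ 0 := by linarith
    rw [hD]
    field_simp
    ring
  by_cases hxT : x < T
  · have hmem : x ∈ {y | y < T} := hxT
    have hY : Yind d ε δ x =
        x ^ D / (1 - 4 ^ D * ε ^ 2 * x ^ D) := by
      rw [Yind, Set.indicator_of_mem hmem]
    set a : ℝ := 4 ^ D * ε ^ 2 * x ^ D with ha
    have hxD0 : 0 ≤ x ^ D := Real.rpow_nonneg hx _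
    have h4D : (0:ℝ) < 4 ^ D := Real.rpow_pos_of_pos (by norm_num) _
    have ha0 : 0 ≤ a := by positivity
    have ha2 : a ≤ 1 / 2 := by
      have hxT' : x ^ D ≤ T ^ D := Real.rpow_le_rpow hx hxT.le hD0.le
      calc a ≤ 4 ^ D * ε ^ 2 * T ^ D := by
              apply mul_le_mul_of_nonneg_left hxT' (by positivity)
        _ = 4 ^ D * ε ^ (D * δ) := by rw [mul_assoc, hTD]
        _ ≤ 1 / 2 := hsmall
    have hden : (1:ℝ)/2 ≤ 1 - a := by linarith
    have hdenpos : (0:ℝ) < 1 - a := by linarith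
    have hYval : Yind d ε δ x = x ^ D / (1 - a) := hY
    have hYnn : 0 ≤ Yind d ε δ x := by
      rw [hYval]; positivity
    have hYle2 : Yind d ε δ x ≤ 2 * x ^ D := by
      rw [hYval, div_le_iff₀ hdenpos]; nlinarith
    have hTDle : x ^ D ≤ T ^ D := Real.rpow_le_rpow hx hxT.le hD0.le
    refine ⟨hYnn, le_trans hYle2 (by nlinarith), ?_⟩
    have hlow : x ^ D ≤ Yind d ε δ x := by
      rw [hYval, le_div_iff₀ hdenpos]; nlinarith
    have hsq : x ^ D * x ^ D = x ^ (2 * D) := by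
      rw [two_mul, Real.rpow_add' hx (by positivity)]
    have hup : Yind d ε δ x - x ^ D ≤ 2 * 4 ^ D * ε ^ 2 * x ^ (2 * D) := by
      rw [hYval]
      rw [div_sub' hdenpos.ne', div_le_iff₀ hdenpos]
      have key : x ^ D - (1 - a) * x ^ D = 4 ^ D * ε ^ 2 * x ^ (2 * D) := by
        rw [ha, ← hsq]; ring
      have hc : (0:ℝ) ≤ 4 ^ D * ε ^ 2 * x ^ (2 * D) := by positivity
      have := mul_le_mul_of_nonneg_left hden hc
      nlinarith
    rw [Set.indicator_of_mem hmem, Set.indicator_of_notMem (by simpa using hxT.not_ge : x ∉ {y | T ≤ y})]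
    rw [abs_of_nonneg (by linarith)]
    linarith
  · push_neg at hxT
    have hY : Yind d ε δ x = 0 := Set.indicator_of_notMem (by simpa using hxT.not_gt) _
    have hxD0 : 0 ≤ x ^ D := Real.rpow_nonneg hx _
    refine ⟨le_of_eq hY.symm, by rw [hY]; positivity, ?_⟩
    rw [hY, Set.indicator_of_notMem (by simpa using hxT.not_gt : x ∉ {y | y < T}),
      Set.indicator_of_mem (by simpa using hxT : x ∈ {y | T ≤ y})]
    rw [zero_sub, abs_neg, abs_of_nonneg hxD0]
    nlinarith

lemma sq_add_le_two_sq (a b : ℝ) : (a + b) ^ 2 ≤ 2 * a ^ 2 + 2 * b ^ 2 := by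
  nlinarith [sq_nonneg (a - b)]

/-- variance-type bound for the averaged truncated marks over a cube of
side `k` in `ℤ^d`, with `C = C(d)`. -/
theorem averaged_marks_second_moment (d : ℕ) (hd : 3 ≤ d) :
    ∃ C > 0, ∀ (δ β ε : ℝ) (k : ℕ),
      δ ∈ Set.Ioc (0 : ℝ) (2 / ((d : ℝ) - 2)) → 0 < β →
      ε ∈ Set.Ioo (0 : ℝ) 1 →
      (4 : ℝ) ^ ((d : ℝ) - 2) * ε ^ (((d : ℝ) - 2) * δ) ≤ 1 / 2 →
      1 ≤ k →
      ∀ (Ω : Type) (_ : MeasurableSpace Ω) (P : Measure Ω), IsProbabilityMeasure P →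
      ∀ (ρ : (Fin d → ℤ) → Ω → ℝ),
        (∀ z, Measurable (ρ z)) →
        (∀ z ω, 0 ≤ ρ z ω) →
        iIndepFun ρ P →
        (∀ z, IdentDistrib (ρ z) (ρ 0) P P) →
        (∫⁻ ω, ENNReal.ofReal (ρ 0 ω ^ ((d : ℝ) - 2 + β)) ∂P ≤ 1) →
        ∫ ω, ((k : ℝ) ^ (-(d : ℝ)) *
                (∑ v : Fin d → Fin k, Yind d ε δ (ρ (fun i => ((v i : ℕ) : ℤ)) ω))
              - ∫ ω', ρ 0 ω' ^ ((d : ℝ) - 2) ∂P) ^ 2 ∂P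
          ≤ C * ((k : ℝ) ^ (-(d : ℝ)) * variance (fun ω => Yind d ε δ (ρ 0 ω)) P
              + ε ^ 4 * (∫ ω, Set.indicator {x | x < Ttrunc d ε δ}
                  (fun x => x ^ (2 * ((d : ℝ) - 2))) (ρ 0 ω) ∂P) ^ 2
              + ε ^ (2 * (2 / ((d : ℝ) - 2) - δ) * β)) := by
  have hd3 : (3 : ℝ) ≤ (d : ℝ) := by exact_mod_cast hd
  have hD0 : (0:ℝ) < (d : ℝ) - 2 := by linarith
  refine ⟨16 * 16 ^ ((d : ℝ) - 2) + 4, by positivity, ?_⟩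
  intro δ β ε k hδ hβ hεm hsmall hk Ω mΩ P hP ρ hmeas hpos hindep hident hmom
  obtain ⟨hε0, hε1⟩ := hεm
  obtain ⟨hδ0, hδle⟩ := hδ
  have hk0 : (0:ℝ) < (k:ℝ) := by exact_mod_cast hk
  -- notation
  set T : ℝ := Ttrunc d ε δ with hTdef
  have hTpos : 0 < T := Real.rpow_pos_of_pos hε0 _
  set c : ℝ := (k : ℝ) ^ (-(d : ℝ)) with hcdef
  have hc0 : 0 < c := Real.rpow_pos_of_pos hk0 _
  set e : (Fin d → Fin k) → (Fin d → ℤ) := fun v i => ((v i : ℕ) : ℤ) with he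
  set g : (Fin d → Fin k) → Ω → ℝ := fun v ω => Yind d ε δ (ρ (e v) ω) with hg
  set Z : Ω → ℝ := fun ω => Yind d ε δ (ρ 0 ω) with hZ
  have hb := fun (z : Fin d → ℤ) (ω : Ω) => Yind_bounds d hd hε0 hsmall (hpos z ω)
  -- memℒp 2 for each composed variable
  have hm2 : ∀ z : Fin d → ℤ, MemLp (fun ω => Yind d ε δ (ρ z ω)) 2 P := by
    intro z
    refine (memLp_top_of_bound ((measurable_Yind d ε δ).comp (hmeas z)).aestronglyMeasurable
      (2 * T ^ ((d:ℝ)-2)) (Filter.Eventually.of_forall fun ω => ?_)).mono_exponent le_top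
    simp only [Function.comp_apply]
    rw [Real.norm_eq_abs, abs_of_nonneg (hb z ω).1]
    exact (hb z ω).2.1
  -- identical distribution of the composed variables
  have hid : ∀ z : Fin d → ℤ, IdentDistrib (fun ω => Yind d ε δ (ρ z ω)) Z P P :=
    fun z => (hident z).comp (measurable_Yind d ε δ)
  have hinj : Function.Injective e := by
    intro u v h
    funext i
    have h2 : ((u i : ℕ) : ℤ) = ((v i : ℕ) : ℤ) := congrFun h i
    exact Fin.val_injective (by exact_mod_cast h2)
  -- the sum as a function
  set F : Ω → ℝ := fun ω => ∑ v : Fin d → Fin k, g v ω with hF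
  have hFsum : F = ∑ v : Fin d → Fin k, g v := by
    funext ω; simp [hF, Finset.sum_apply]
  have hmemF : MemLp F 2 P := by
    rw [hFsum]; exact memLp_finset_sum' _ (fun v _ => hm2 (e v))
  set S : Ω → ℝ := fun ω => c * F ω with hS
  have hmemS : MemLp S 2 P := hmemF.const_mul c
  -- variance of the sum
  have hvarF : variance F P = (k:ℝ) ^ d * variance Z P := by
    rw [hFsum, IndepFun.variance_sum (fun v _ => hm2 (e v))
      (fun u _ v _ huv => ((hindep.indepFun (fun h => huv (hinj h))).comp
        (measurable_Yind d ε δ) (measurable_Yind d ε δ)))]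
    have : ∀ v : Fin d → Fin k, variance (g v) P = variance Z P :=
      fun v => (hid (e v)).variance_eq
    rw [Finset.sum_congr rfl (fun v _ => this v), Finset.sum_const, Finset.card_univ]
    simp [Fintype.card_fun, mul_comm]
  have hck : c ^ 2 * (k:ℝ) ^ d = c := by
    rw [hcdef, ← Real.rpow_natCast ((k:ℝ) ^ (-(d:ℝ))) 2, ← Real.rpow_mul hk0.le,
      ← Real.rpow_natCast (k:ℝ) d, ← Real.rpow_add hk0]
    congr 1
    push_cast
    ring
  have hvarS : variance S P = c * variance Z P := by
    have : S = c • F := by funext ω; simp [hS]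
    rw [this, variance_smul, hvarF, ← mul_assoc, hck]
  -- expectations
  have hintg : ∀ z : Fin d → ℤ, Integrable (fun ω => Yind d ε δ (ρ z ω)) P :=
    fun z => (hm2 z).integrable one_le_two
  have hEg : ∀ v : Fin d → Fin k, ∫ ω, g v ω ∂P = ∫ ω, Z ω ∂P :=
    fun v => (hid (e v)).integral_eq
  have hintF : Integrable F P := hmemF.integrable one_le_two
  have hintS : Integrable S P := hmemS.integrable one_le_two
  have hES : ∫ ω, S ω ∂P = ∫ ω, Z ω ∂P := by
    rw [hS]
    simp only
    rw [integral_const_mul, hF]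
    simp only
    rw [integral_finset_sum _ (fun v _ => hintg (e v))]
    rw [Finset.sum_congr rfl (fun v _ => hEg v), Finset.sum_const, Finset.card_univ]
    simp only [Fintype.card_fun, Fintype.card_fin, nsmul_eq_mul, Nat.cast_pow]
    rw [← mul_assoc]
    have : c * (k:ℝ) ^ d = 1 := by
      rw [hcdef, ← Real.rpow_natCast (k:ℝ) d, ← Real.rpow_add hk0]
      simp
    rw [this, one_mul]
  -- name the target quantities
  set m : ℝ := ∫ ω, ρ 0 ω ^ ((d:ℝ) - 2) ∂P with hm
  set A : ℝ := ∫ ω, Set.indicator {x | x < T} (fun x => x ^ (2 * ((d:ℝ) - 2))) (ρ 0 ω) ∂P with hA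
  set EZ : ℝ := ∫ ω, Z ω ∂P with hEZ
  have hrw : (fun ω => (c * ∑ v : Fin d → Fin k,
        Yind d ε δ (ρ (fun i => ((v i : ℕ) : ℤ)) ω) - m) ^ 2)
      = (fun ω => (S ω - m) ^ 2) := by
    funext ω
    rw [hS, hF, hg, he]
  -- integrability facts for the bias estimate
  have hmeasDβ : Measurable (fun ω => ρ 0 ω ^ ((d:ℝ) - 2 + β)) :=
    (by fun_prop : Measurable fun x : ℝ => x ^ ((d:ℝ) - 2 + β)).comp (hmeas 0)
  have int1 : Integrable (fun ω => ρ 0 ω ^ ((d:ℝ) - 2 + β)) P := by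
    refine ⟨hmeasDβ.aestronglyMeasurable, ?_⟩
    rw [hasFiniteIntegral_iff_ofReal
      (Filter.Eventually.of_forall fun ω => Real.rpow_nonneg (hpos 0 ω) _)]
    exact lt_of_le_of_lt hmom ENNReal.one_lt_top
  have hint_moment : ∫ ω, ρ 0 ω ^ ((d:ℝ) - 2 + β) ∂P ≤ 1 := by
    rw [integral_eq_lintegral_of_nonneg_ae
      (Filter.Eventually.of_forall fun ω => Real.rpow_nonneg (hpos 0 ω) _)
      hmeasDβ.aestronglyMeasurable]
    calc (∫⁻ ω, ENNReal.ofReal (ρ 0 ω ^ ((d:ℝ) - 2 + β)) ∂P).toReal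
        ≤ (1 : ENNReal).toReal := ENNReal.toReal_mono ENNReal.one_ne_top hmom
      _ = 1 := by simp
  have intρD : Integrable (fun ω => ρ 0 ω ^ ((d:ℝ) - 2)) P := by
    refine Integrable.mono' ((integrable_const (1:ℝ)).add int1)
      ((by fun_prop : Measurable fun x : ℝ => x ^ ((d:ℝ) - 2)).comp (hmeas 0)).aestronglyMeasurable
      (Filter.Eventually.of_forall fun ω => ?_)
    rw [Real.norm_eq_abs, abs_of_nonneg (Real.rpow_nonneg (hpos 0 ω) _)]
    have h2 : 0 ≤ ρ 0 ω ^ ((d:ℝ) - 2 + β) := Real.rpow_nonneg (hpos 0 ω) _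
    have happ : ((fun _ : Ω => (1:ℝ)) + fun ω => ρ 0 ω ^ ((d:ℝ) - 2 + β)) ω
        = 1 + ρ 0 ω ^ ((d:ℝ) - 2 + β) := rfl
    rw [happ]
    rcases le_or_gt (ρ 0 ω) 1 with h | h
    · have : ρ 0 ω ^ ((d:ℝ) - 2) ≤ 1 := Real.rpow_le_one (hpos 0 ω) h (by linarith)
      linarith
    · have : ρ 0 ω ^ ((d:ℝ) - 2) ≤ ρ 0 ω ^ ((d:ℝ) - 2 + β) :=
        Real.rpow_le_rpow_of_exponent_le h.le (by linarith)
      linarith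
  have intZ : Integrable Z P := hintg 0
  have intInd1 : Integrable
      (fun ω => Set.indicator {x | x < T} (fun x => x ^ (2 * ((d:ℝ) - 2))) (ρ 0 ω)) P := by
    have hmeasI : Measurable fun ω =>
        Set.indicator {x | x < T} (fun x => x ^ (2 * ((d:ℝ) - 2))) (ρ 0 ω) :=
      (Measurable.indicator (by fun_prop) measurableSet_Iio).comp (hmeas 0)
    refine Integrable.mono' (integrable_const (T ^ (2 * ((d:ℝ) - 2))))
      hmeasI.aestronglyMeasurable (Filter.Eventually.of_forall fun ω => ?_)
    rw [Real.norm_eq_abs]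
    rcases lt_or_ge (ρ 0 ω) T with h | h
    · rw [Set.indicator_of_mem (show ρ 0 ω ∈ {x | x < T} from h),
        abs_of_nonneg (Real.rpow_nonneg (hpos 0 ω) _)]
      exact Real.rpow_le_rpow (hpos 0 ω) h.le (by positivity)
    · rw [Set.indicator_of_notMem (show ρ 0 ω ∉ {x | x < T} by simpa using h.not_gt)]
      simp only [abs_zero]
      positivity
  have hA0 : 0 ≤ A := by
    rw [hA]
    refine integral_nonneg fun ω => ?_
    rcases lt_or_ge (ρ 0 ω) T with h | h
    · rw [Set.indicator_of_mem (show ρ 0 ω ∈ {x | x < T} from h)]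
      exact Real.rpow_nonneg (hpos 0 ω) _
    · rw [Set.indicator_of_notMem (show ρ 0 ω ∉ {x | x < T} by simpa using h.not_gt)]
      exact le_rfl
  have h2nonneg : ∀ ω, 0 ≤ Set.indicator {y | T ≤ y} (fun y => y ^ ((d:ℝ) - 2)) (ρ 0 ω) := by
    intro ω
    rcases le_or_gt T (ρ 0 ω) with h | h
    · rw [Set.indicator_of_mem (show ρ 0 ω ∈ {y | T ≤ y} from h)]
      exact Real.rpow_nonneg (hpos 0 ω) _
    · rw [Set.indicator_of_notMem (show ρ 0 ω ∉ {y | T ≤ y} by simpa using h.not_ge)]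
  have h2bound : ∀ ω, Set.indicator {y | T ≤ y} (fun y => y ^ ((d:ℝ) - 2)) (ρ 0 ω)
      ≤ T ^ (-β) * ρ 0 ω ^ ((d:ℝ) - 2 + β) := by
    intro ω
    rcases le_or_gt T (ρ 0 ω) with h | h
    · rw [Set.indicator_of_mem (show ρ 0 ω ∈ {y | T ≤ y} from h), Real.rpow_neg hTpos.le,
        inv_mul_eq_div, le_div_iff₀ (Real.rpow_pos_of_pos hTpos β),
        Real.rpow_add' (hpos 0 ω) (ne_of_gt (by linarith : (0:ℝ) < (d:ℝ) - 2 + β))]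
      exact mul_le_mul_of_nonneg_left (Real.rpow_le_rpow hTpos.le h hβ.le)
        (Real.rpow_nonneg (hpos 0 ω) _)
    · rw [Set.indicator_of_notMem (show ρ 0 ω ∉ {y | T ≤ y} by simpa using h.not_ge)]
      exact mul_nonneg (Real.rpow_nonneg hTpos.le _) (Real.rpow_nonneg (hpos 0 ω) _)
  have intInd2 : Integrable
      (fun ω => Set.indicator {y | T ≤ y} (fun y => y ^ ((d:ℝ) - 2)) (ρ 0 ω)) P := by
    have hmeasI : Measurable fun ω =>
        Set.indicator {y | T ≤ y} (fun y => y ^ ((d:ℝ) - 2)) (ρ 0 ω) :=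
      (Measurable.indicator (by fun_prop) measurableSet_Ici).comp (hmeas 0)
    refine Integrable.mono' (int1.const_mul (T ^ (-β))) hmeasI.aestronglyMeasurable
      (Filter.Eventually.of_forall fun ω => ?_)
    rw [Real.norm_eq_abs, abs_of_nonneg (h2nonneg ω)]
    exact h2bound ω
  have hγ : T ^ (-β) = ε ^ ((2 / ((d:ℝ) - 2) - δ) * β) := by
    rw [hTdef, Ttrunc, ← Real.rpow_mul hε0.le]
    congr 1
    ring
  have hIntInd2 : ∫ ω, Set.indicator {y | T ≤ y} (fun y => y ^ ((d:ℝ) - 2)) (ρ 0 ω) ∂P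
      ≤ ε ^ ((2 / ((d:ℝ) - 2) - δ) * β) := by
    have step1 : ∫ ω, Set.indicator {y | T ≤ y} (fun y => y ^ ((d:ℝ) - 2)) (ρ 0 ω) ∂P
        ≤ ∫ ω, T ^ (-β) * ρ 0 ω ^ ((d:ℝ) - 2 + β) ∂P :=
      integral_mono intInd2 (int1.const_mul _) h2bound
    rw [integral_const_mul] at step1
    have step2 : T ^ (-β) * ∫ ω, ρ 0 ω ^ ((d:ℝ) - 2 + β) ∂P ≤ T ^ (-β) * 1 :=
      mul_le_mul_of_nonneg_left hint_moment (Real.rpow_nonneg hTpos.le _)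
    rw [mul_one] at step2
    rw [← hγ]
    linarith
  -- bias bound
  have hbias : |EZ - m| ≤ 2 * 4 ^ ((d:ℝ) - 2) * ε ^ 2 * A + ε ^ ((2 / ((d:ℝ) - 2) - δ) * β) := by
    have hsub : EZ - m = ∫ ω, (Z ω - ρ 0 ω ^ ((d:ℝ) - 2)) ∂P := by
      rw [hEZ, hm, integral_sub intZ intρD]
    rw [hsub]
    have habs : |∫ ω, (Z ω - ρ 0 ω ^ ((d:ℝ) - 2)) ∂P|
        ≤ ∫ ω, |Z ω - ρ 0 ω ^ ((d:ℝ) - 2)| ∂P := by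
      calc |∫ ω, (Z ω - ρ 0 ω ^ ((d:ℝ) - 2)) ∂P|
          = ‖∫ ω, (Z ω - ρ 0 ω ^ ((d:ℝ) - 2)) ∂P‖ := (Real.norm_eq_abs _).symm
        _ ≤ ∫ ω, ‖Z ω - ρ 0 ω ^ ((d:ℝ) - 2)‖ ∂P := norm_integral_le_integral_norm _
        _ = ∫ ω, |Z ω - ρ 0 ω ^ ((d:ℝ) - 2)| ∂P := by simp [Real.norm_eq_abs]
    have hptwise : ∀ ω, |Z ω - ρ 0 ω ^ ((d:ℝ) - 2)|
        ≤ 2 * 4 ^ ((d:ℝ) - 2) * ε ^ 2 *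
            Set.indicator {y | y < T} (fun y => y ^ (2 * ((d:ℝ) - 2))) (ρ 0 ω)
          + Set.indicator {y | T ≤ y} (fun y => y ^ ((d:ℝ) - 2)) (ρ 0 ω) :=
      fun ω => (hb 0 ω).2.2
    have hmono : ∫ ω, |Z ω - ρ 0 ω ^ ((d:ℝ) - 2)| ∂P
        ≤ ∫ ω, (2 * 4 ^ ((d:ℝ) - 2) * ε ^ 2 *
            Set.indicator {y | y < T} (fun y => y ^ (2 * ((d:ℝ) - 2))) (ρ 0 ω)
          + Set.indicator {y | T ≤ y} (fun y => y ^ ((d:ℝ) - 2)) (ρ 0 ω)) ∂P :=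
      integral_mono (intZ.sub intρD).abs ((intInd1.const_mul _).add intInd2) hptwise
    rw [integral_add (intInd1.const_mul _) intInd2, integral_const_mul] at hmono
    have := add_le_add_left hIntInd2
      (2 * 4 ^ ((d:ℝ) - 2) * ε ^ 2 *
        ∫ ω, Set.indicator {x | x < T} (fun x => x ^ (2 * ((d:ℝ) - 2))) (ρ 0 ω) ∂P)
    calc |∫ ω, (Z ω - ρ 0 ω ^ ((d:ℝ) - 2)) ∂P|
        ≤ ∫ ω, |Z ω - ρ 0 ω ^ ((d:ℝ) - 2)| ∂P := habs
      _ ≤ 2 * 4 ^ ((d:ℝ) - 2) * ε ^ 2 *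
            (∫ ω, Set.indicator {y | y < T} (fun y => y ^ (2 * ((d:ℝ) - 2))) (ρ 0 ω) ∂P)
          + ∫ ω, Set.indicator {y | T ≤ y} (fun y => y ^ ((d:ℝ) - 2)) (ρ 0 ω) ∂P := hmono
      _ ≤ 2 * 4 ^ ((d:ℝ) - 2) * ε ^ 2 * A + ε ^ ((2 / ((d:ℝ) - 2) - δ) * β) := by
          rw [hA]
          exact add_le_add_right hIntInd2 _
  -- variance identity for the centered second moment
  have hvarint : variance S P = ∫ ω, (S ω - EZ) ^ 2 ∂P := by
    rw [variance_eq_integral hmemS.aestronglyMeasurable.aemeasurable, hES]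
  have hmemSEZ : MemLp (fun ω => S ω - EZ) 2 P := hmemS.sub (memLp_const EZ)
  have intSEZ2 : Integrable (fun ω => (S ω - EZ) ^ 2) P := hmemSEZ.integrable_sq
  have hmemSm : MemLp (fun ω => S ω - m) 2 P := hmemS.sub (memLp_const m)
  have intSm2 : Integrable (fun ω => (S ω - m) ^ 2) P := hmemSm.integrable_sq
  have key : ∀ ω, (S ω - m) ^ 2 ≤ 2 * (S ω - EZ) ^ 2 + 2 * (EZ - m) ^ 2 := by
    intro ω
    have h := sq_add_le_two_sq (S ω - EZ) (EZ - m)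
    have h' : S ω - EZ + (EZ - m) = S ω - m := by ring
    rw [h'] at h
    exact h
  -- squared-bias estimates
  have h16 : ((4:ℝ) ^ ((d:ℝ) - 2)) ^ 2 = (16:ℝ) ^ ((d:ℝ) - 2) := by
    rw [sq, ← Real.rpow_add (by norm_num : (0:ℝ) < 4),
      show (16:ℝ) = (4:ℝ) ^ (2:ℝ) by
        rw [show (2:ℝ) = ((2:ℕ):ℝ) by norm_num, Real.rpow_natCast]; norm_num,
      ← Real.rpow_mul (by norm_num : (0:ℝ) ≤ 4)]
    congr 1
    ring
  have hB2sq : (ε ^ ((2 / ((d:ℝ) - 2) - δ) * β)) ^ 2 = ε ^ (2 * (2 / ((d:ℝ) - 2) - δ) * β) := by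
    rw [← Real.rpow_natCast (ε ^ ((2 / ((d:ℝ) - 2) - δ) * β)) 2, ← Real.rpow_mul hε0.le]
    congr 1
    push_cast
    ring
  have hbias_sq : (EZ - m) ^ 2 ≤ 8 * 16 ^ ((d:ℝ) - 2) * (ε ^ 4 * A ^ 2)
      + 2 * ε ^ (2 * (2 / ((d:ℝ) - 2) - δ) * β) := by
    have h1 : (EZ - m) ^ 2 ≤ (2 * 4 ^ ((d:ℝ) - 2) * ε ^ 2 * A
        + ε ^ ((2 / ((d:ℝ) - 2) - δ) * β)) ^ 2 := by
      rw [← sq_abs (EZ - m)]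
      exact pow_le_pow_left₀ (abs_nonneg _) hbias 2
    have h2 : (2 * 4 ^ ((d:ℝ) - 2) * ε ^ 2 * A + ε ^ ((2 / ((d:ℝ) - 2) - δ) * β)) ^ 2
        ≤ 2 * (2 * 4 ^ ((d:ℝ) - 2) * ε ^ 2 * A) ^ 2
          + 2 * (ε ^ ((2 / ((d:ℝ) - 2) - δ) * β)) ^ 2 :=
      sq_add_le_two_sq _ _
    have h3 : (2 * 4 ^ ((d:ℝ) - 2) * ε ^ 2 * A) ^ 2
        = 4 * 16 ^ ((d:ℝ) - 2) * (ε ^ 4 * A ^ 2) := by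
      rw [← h16]; ring
    rw [h3, hB2sq] at h2
    linarith
  -- put everything together
  have hchain : ∫ ω, (S ω - m) ^ 2 ∂P ≤ 2 * (c * variance Z P) + 2 * (EZ - m) ^ 2 := by
    calc ∫ ω, (S ω - m) ^ 2 ∂P
        ≤ ∫ ω, (2 * (S ω - EZ) ^ 2 + 2 * (EZ - m) ^ 2) ∂P :=
          integral_mono intSm2 ((intSEZ2.const_mul 2).add (integrable_const _))
            (fun ω => key ω)
      _ = 2 * ∫ ω, (S ω - EZ) ^ 2 ∂P + 2 * (EZ - m) ^ 2 := by
          rw [integral_add (intSEZ2.const_mul 2) (integrable_const _), integral_const_mul,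
            integral_const]
          simp
      _ = 2 * variance S P + 2 * (EZ - m) ^ 2 := by rw [hvarint]
      _ = 2 * (c * variance Z P) + 2 * (EZ - m) ^ 2 := by rw [hvarS]
  have h16D1 : (1:ℝ) ≤ 16 ^ ((d:ℝ) - 2) :=
    Real.one_le_rpow (by norm_num) (by linarith)
  have ht1 : 0 ≤ c * variance Z P := mul_nonneg hc0.le (variance_nonneg _ _)
  have ht2 : 0 ≤ ε ^ 4 * A ^ 2 := by positivity
  have ht3 : 0 ≤ ε ^ (2 * (2 / ((d:ℝ) - 2) - δ) * β) := Real.rpow_nonneg hε0.le _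
  rw [hrw]
  clear_value T c e g Z F S m A EZ
  have hfinal : ∫ ω, (S ω - m) ^ 2 ∂P
      ≤ (16 * 16 ^ ((d:ℝ) - 2) + 4) *
        (c * variance Z P + ε ^ 4 * A ^ 2 + ε ^ (2 * (2 / ((d:ℝ) - 2) - δ) * β)) := by
    have e1 : 2 * (c * variance Z P) ≤ (16 * 16 ^ ((d:ℝ) - 2) + 4) * (c * variance Z P) :=
      mul_le_mul_of_nonneg_right (by linarith [h16D1]) ht1
    have e2 : 16 * 16 ^ ((d:ℝ) - 2) * (ε ^ 4 * A ^ 2)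
        ≤ (16 * 16 ^ ((d:ℝ) - 2) + 4) * (ε ^ 4 * A ^ 2) :=
      mul_le_mul_of_nonneg_right (by linarith [h16D1]) ht2
    have e3 : 4 * ε ^ (2 * (2 / ((d:ℝ) - 2) - δ) * β)
        ≤ (16 * 16 ^ ((d:ℝ) - 2) + 4) * ε ^ (2 * (2 / ((d:ℝ) - 2) - δ) * β) :=
      mul_le_mul_of_nonneg_right (by linarith [h16D1]) ht3
    calc ∫ ω, (S ω - m) ^ 2 ∂P
        ≤ 2 * (c * variance Z P) + 2 * (EZ - m) ^ 2 := hchain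
      _ ≤ 2 * (c * variance Z P) + 16 * 16 ^ ((d:ℝ) - 2) * (ε ^ 4 * A ^ 2)
          + 4 * ε ^ (2 * (2 / ((d:ℝ) - 2) - δ) * β) := by linarith
      _ ≤ (16 * 16 ^ ((d:ℝ) - 2) + 4) * (c * variance Z P)
          + (16 * 16 ^ ((d:ℝ) - 2) + 4) * (ε ^ 4 * A ^ 2)
          + (16 * 16 ^ ((d:ℝ) - 2) + 4) * ε ^ (2 * (2 / ((d:ℝ) - 2) - δ) * β) := by
            linarith
      _ = (16 * 16 ^ ((d:ℝ) - 2) + 4) *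
          (c * variance Z P + ε ^ 4 * A ^ 2 + ε ^ (2 * (2 / ((d:ℝ) - 2) - δ) * β)) := by
            ring
  exact hfinal
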